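/- For every natural number r ≥ 0, the assignment sending the class of a polynomial p to the class of (β + (−1)^{r+1}·8)·p gives a well-defined and injective ℂ[α,β]-linear map F̄_r → F̄_{r+1}. -/

import Mathlib

open MvPolynomial

/-- The pair (R̄¹_r, R̄²_r) of polynomials in ℂ[α,β] (α = X 0, β = X 1), defined by
R̄¹_0 = 1, R̄²_0 = 0 and the recursion R̄¹_{r+1} = α·R̄¹_r + r²·R̄²_r,
R̄²_{r+1} = (β + (−1)^{r+1}·8)·R̄¹_r. -/
noncomputable def Rb : ℕ → MvPolynomial (Fin 2) ℂ × MvPolynomial (Fin 2) ℂ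
  | 0 => (1, 0)
  | (r + 1) =>
      (X 0 * (Rb r).1 + C ((r : ℂ) ^ 2) * (Rb r).2,
       (X 1 + C ((-1 : ℂ) ^ (r + 1) * 8)) * (Rb r).1)

/-- The ideal J̄_r = (R̄¹_r, R̄²_r) ⊆ ℂ[α,β]. -/
noncomputable def Jb (r : ℕ) : Ideal (MvPolynomial (Fin 2) ℂ) :=
  Ideal.span {(Rb r).1, (Rb r).2}

/-- Substitution divisibility: (X 1 + C c) divides g - g[X 1 ↦ -c]. -/
lemma aux_dvd_sub (c : ℂ) (g : MvPolynomial (Fin 2) ℂ) :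
    (X 1 + C c) ∣ g - aeval ![X 0, C (-c)] g := by
  induction g using MvPolynomial.induction_on with
  | C a => simp
  | add p q hp hq =>
      have := dvd_add hp hq
      convert this using 1
      simp only [map_add]; ring
  | mul_X p i hp =>
      fin_cases i
      · have := hp.mul_right (X 0)
        convert this using 1
        simp only [Fin.mk_zero, Fin.mk_one, Fin.isValue, map_mul, aeval_X, Matrix.cons_val_zero]; ring
      · have h1 : (X 1 + C c) ∣ (aeval ![X 0, C (-c)] p) * ((X 1 : MvPolynomial (Fin 2) ℂ) + C c) :=
          Dvd.intro_left _ rfl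
        have := dvd_add (hp.mul_right (X 1)) h1
        convert this using 1
        simp only [Fin.mk_zero, Fin.mk_one, Fin.isValue, map_mul, aeval_X, Matrix.cons_val_one, Matrix.head_cons, map_neg, Matrix.cons_val_zero]; ring

/-- Under any evaluation sending α ↦ X, β ↦ constant, R̄¹_k is monic of degree k
and R̄²_k has degree < k. -/
lemma aux_monic (d : ℂ) (k : ℕ) :
    ((aeval ![Polynomial.X, Polynomial.C d] : MvPolynomial (Fin 2) ℂ →ₐ[ℂ] Polynomial ℂ)
        (Rb k).1).Monic ∧
    (aeval ![Polynomial.X, Polynomial.C d] (Rb k).1).degree = k ∧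
    (aeval ![Polynomial.X, Polynomial.C d] (Rb k).2).degree < (k : WithBot ℕ) := by
  induction k with
  | zero =>
      simp [Rb, Polynomial.monic_one]
  | succ k ih =>
      obtain ⟨h1, hd1, h2⟩ := ih
      set φ := (aeval ![Polynomial.X, Polynomial.C d] :
        MvPolynomial (Fin 2) ℂ →ₐ[ℂ] Polynomial ℂ) with hφ
      have e1 : φ (Rb (k+1)).1 = Polynomial.X * φ (Rb k).1
          + Polynomial.C ((k : ℂ)^2) * φ (Rb k).2 := by
        simp [hφ, Rb, aeval_C, Polynomial.algebraMap_eq]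
      have e2 : φ (Rb (k+1)).2 = Polynomial.C (d + (-1 : ℂ)^(k+1) * 8) * φ (Rb k).1 := by
        simp [hφ, Rb, aeval_C, Polynomial.algebraMap_eq]
      have hXm : (Polynomial.X * φ (Rb k).1).Monic := Polynomial.monic_X.mul h1
      have hXd : (Polynomial.X * φ (Rb k).1).degree = ((k+1 : ℕ) : WithBot ℕ) := by
        rw [Polynomial.degree_mul, Polynomial.degree_X, hd1]
        push_cast; ring
      have hlt : (Polynomial.C ((k : ℂ)^2) * φ (Rb k).2).degree
          < (Polynomial.X * φ (Rb k).1).degree := by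
        rw [hXd]
        refine lt_of_le_of_lt (Polynomial.degree_mul_le _ _) ?_
        refine lt_of_le_of_lt (add_le_add_left Polynomial.degree_C_le _) ?_
        rw [zero_add]
        exact lt_of_lt_of_le h2 (by exact_mod_cast Nat.cast_le.mpr (Nat.le_succ k))
      refine ⟨?_, ?_, ?_⟩
      · rw [e1]; exact hXm.add_of_left hlt
      · rw [e1, Polynomial.degree_add_eq_left_of_degree_lt hlt, hXd]
      · rw [e2]
        refine lt_of_le_of_lt (Polynomial.degree_mul_le _ _) ?_
        refine lt_of_le_of_lt (add_le_add_left Polynomial.degree_C_le _) ?_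
        rw [zero_add, hd1]
        exact_mod_cast Nat.lt_succ_self k

/-- For every r ≥ 0, the assignment sending the class of a polynomial p in F̄_r = ℂ[α,β]/J̄_r to
the class of (β + (−1)^{r+1}·8)·p in F̄_{r+1} gives a well-defined and injective
ℂ[α,β]-linear map F̄_r → F̄_{r+1}. -/
theorem stmt5 (r : ℕ) :
    ∃ f : (MvPolynomial (Fin 2) ℂ ⧸ Jb r) →ₗ[MvPolynomial (Fin 2) ℂ]
        (MvPolynomial (Fin 2) ℂ ⧸ Jb (r + 1)),
      (∀ p : MvPolynomial (Fin 2) ℂ,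
        f (Ideal.Quotient.mk (Jb r) p) =
          Ideal.Quotient.mk (Jb (r + 1)) ((X 1 + C ((-1 : ℂ) ^ (r + 1) * 8)) * p)) ∧
      Function.Injective f := by
  set b : MvPolynomial (Fin 2) ℂ := X 1 + C ((-1 : ℂ) ^ (r + 1) * 8) with hb
  set G : MvPolynomial (Fin 2) ℂ →ₗ[MvPolynomial (Fin 2) ℂ]
      (MvPolynomial (Fin 2) ℂ ⧸ Jb (r + 1)) :=
    (Jb (r + 1)).mkQ.comp (LinearMap.mulLeft (MvPolynomial (Fin 2) ℂ) b) with hG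
  have hB : (Rb (r + 1)).2 = b * (Rb r).1 := rfl
  have hA : (Rb (r + 1)).1 = X 0 * (Rb r).1 + C ((r : ℂ) ^ 2) * (Rb r).2 := rfl
  have hAmem : (Rb (r + 1)).1 ∈ Jb (r + 1) :=
    Ideal.subset_span (Set.mem_insert _ _)
  have hBmem : (Rb (r + 1)).2 ∈ Jb (r + 1) :=
    Ideal.subset_span (Set.mem_insert_of_mem _ rfl)
  -- well-definedness
  have hle : Jb r ≤ LinearMap.ker G := by
    rw [Jb]
    refine Ideal.span_le.mpr ?_
    intro x hx
    simp only [Set.mem_insert_iff, Set.mem_singleton_iff] at hx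
    have hmem : ∀ y : MvPolynomial (Fin 2) ℂ, b * y ∈ Jb (r + 1) → y ∈ LinearMap.ker G := by
      intro y hy
      simp only [hG, LinearMap.mem_ker, LinearMap.comp_apply, LinearMap.mulLeft_apply,
        Submodule.mkQ_apply, Submodule.Quotient.mk_eq_zero]
      exact hy
    rcases hx with h | h
    · exact hmem _ (h ▸ (hB ▸ hBmem))
    · subst h
      by_cases hr : r = 0
      · subst hr
        refine hmem _ ?_
        simp [Rb]
      · have hne : ((r : ℂ) ^ 2) ≠ 0 := pow_ne_zero 2 (Nat.cast_ne_zero.mpr hr)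
        have hkey : C ((r : ℂ) ^ 2) * (b * (Rb r).2)
            = b * (Rb (r + 1)).1 - X 0 * (Rb (r + 1)).2 := by
          rw [hA, hB]; ring
        have heq : b * (Rb r).2
            = C (((r : ℂ) ^ 2)⁻¹) * (b * (Rb (r + 1)).1 - X 0 * (Rb (r + 1)).2) := by
          rw [← hkey, ← mul_assoc, ← map_mul, inv_mul_cancel₀ hne, map_one, one_mul]
        refine hmem _ ?_
        rw [heq]
        exact Ideal.mul_mem_left _ _
          (Ideal.sub_mem _ (Ideal.mul_mem_left _ _ hAmem) (Ideal.mul_mem_left _ _ hBmem))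
  refine ⟨Submodule.liftQ (Jb r) G hle, fun p => ?_, ?_⟩
  · rw [← Ideal.Quotient.mk_eq_mk, Submodule.liftQ_apply]
    simp only [hG, LinearMap.comp_apply, LinearMap.mulLeft_apply, Submodule.mkQ_apply,
      Ideal.Quotient.mk_eq_mk, hb]
  -- injectivity
  rw [← LinearMap.ker_eq_bot, LinearMap.ker_eq_bot']
  intro m hm
  obtain ⟨p, rfl⟩ := Ideal.Quotient.mk_surjective m
  have hm' : b * p ∈ Jb (r + 1) := by
    have : Ideal.Quotient.mk (Jb (r + 1)) (b * p) = 0 := hm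
    exact (Ideal.Quotient.eq_zero_iff_mem).mp this
  rw [Jb, Ideal.mem_span_pair] at hm'
  obtain ⟨g, h, hgh⟩ := hm'
  -- evaluation maps
  set c : ℂ := (-1 : ℂ) ^ (r + 1) * 8 with hc
  set φ : MvPolynomial (Fin 2) ℂ →ₐ[ℂ] Polynomial ℂ :=
    aeval ![Polynomial.X, Polynomial.C (-c)] with hφ
  have hφb : φ b = 0 := by
    simp [hφ, hb, aeval_C, Polynomial.algebraMap_eq]
  have hφA : (φ (Rb (r + 1)).1).Monic := (aux_monic (-c) (r + 1)).1
  have hφg : φ g = 0 := by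
    have := congrArg φ hgh
    simp only [map_add, map_mul, hB, hφb, zero_mul, mul_zero, add_zero] at this
    rcases mul_eq_zero.mp this with h0 | h0
    · exact h0
    · exact absurd h0 hφA.ne_zero
  -- transport back: ψ g = 0
  set ψ : MvPolynomial (Fin 2) ℂ →ₐ[ℂ] MvPolynomial (Fin 2) ℂ :=
    aeval ![X 0, C (-c)] with hψ
  set ι : Polynomial ℂ →ₐ[ℂ] MvPolynomial (Fin 2) ℂ := Polynomial.aeval (X 0) with hι
  have hcomp : ι.comp φ = ψ := by
    apply MvPolynomial.algHom_ext
    intro i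
    fin_cases i <;>
      simp [hι, hφ, hψ, Polynomial.algebraMap_eq, aeval_C]
  have hψg : ψ g = 0 := by
    rw [← hcomp]
    simp [hφg]
  have hdvd : b ∣ g := by
    have := aux_dvd_sub c g
    rw [← hψ] at this
    rwa [hψg, sub_zero, ← hb] at this
  obtain ⟨g', rfl⟩ := hdvd
  -- cancel b
  have hbne : b ≠ 0 := by
    intro h0
    have := congrArg (eval (fun _ : Fin 2 => 1 - c)) h0
    simp [hb] at this
  have hp : p = g' * (Rb (r + 1)).1 + h * (Rb r).1 := by
    apply mul_left_cancel₀ hbne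
    rw [← hgh, hB]; ring
  have hpmem : p ∈ Jb r := by
    rw [Jb, Ideal.mem_span_pair]
    exact ⟨g' * X 0 + h, g' * C ((r : ℂ) ^ 2), by rw [hp, hA]; ring⟩
  exact Ideal.Quotient.eq_zero_iff_mem.mpr hpmem
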